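/- Let n ≥ 2 and let μ be any probability distribution on the simple graphs with vertex set {1,...,n} (no independence assumption required). If every unordered pair e of distinct vertices has marginal probability Pr[X_e] > 1 − 2/n of being an edge, then a graph sampled from μ is connected with positive probability; equivalently, the support of μ contains a connected graph. -/

import Mathlib

open scoped Classical

noncomputable def pr {n : ℕ} (μ : SimpleGraph (Fin n) → ℝ) (P : SimpleGraph (Fin n) → Prop) : ℝ :=
  ∑ G : SimpleGraph (Fin n), if P G then μ G else 0

def IsDist {n : ℕ} (μ : SimpleGraph (Fin n) → ℝ) : Prop :=
  (∀ G, 0 ≤ μ G) ∧ ∑ G : SimpleGraph (Fin n), μ G = 1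

lemma pr_not_aux {n : ℕ} (μ : SimpleGraph (Fin n) → ℝ) (hμ : IsDist μ)
    (P : SimpleGraph (Fin n) → Prop) : pr μ (fun G => ¬ P G) = 1 - pr μ P := by
  have h : pr μ P + pr μ (fun G => ¬ P G) = 1 := by
    rw [← hμ.2]
    simp only [pr, ← Finset.sum_add_distrib]
    apply Finset.sum_congr rfl
    intro G _
    by_cases h : P G <;> simp [h]
  linarith

lemma disconn_card_aux {n : ℕ} (hn : 2 ≤ n) (G : SimpleGraph (Fin n)) (h : ¬ G.Connected) :
    2 * (n - 1) ≤ (Finset.univ.filter (fun p : Fin n × Fin n => p.1 ≠ p.2 ∧ ¬ G.Adj p.1 p.2)).card := by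
  haveI : Nonempty (Fin n) := ⟨⟨0, by omega⟩⟩
  rw [SimpleGraph.connected_iff] at h
  push_neg at h
  have hpre : ¬ G.Preconnected := fun hp => not_isEmpty_of_nonempty (Fin n) (h hp)
  unfold SimpleGraph.Preconnected at hpre
  push_neg at hpre
  obtain ⟨u, v, huv⟩ := hpre
  set S : Finset (Fin n) := Finset.univ.filter (fun w => G.Reachable u w) with hS
  have huS : u ∈ S := by
    simp only [hS, Finset.mem_filter, Finset.mem_univ, true_and]
    exact SimpleGraph.Reachable.refl u
  have hvS : v ∈ Sᶜ := by simp [hS, huv]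
  have hsub : S ×ˢ Sᶜ ∪ Sᶜ ×ˢ S ⊆
      Finset.univ.filter (fun p : Fin n × Fin n => p.1 ≠ p.2 ∧ ¬ G.Adj p.1 p.2) := by
    intro p hp
    simp only [Finset.mem_union, Finset.mem_product, Finset.mem_compl, hS,
      Finset.mem_filter, Finset.mem_univ, true_and] at hp ⊢
    rcases hp with ⟨h1, h2⟩ | ⟨h1, h2⟩
    · refine ⟨fun he => h2 (he ▸ h1), fun hadj => h2 (h1.trans hadj.reachable)⟩
    · refine ⟨fun he => h1 (he ▸ h2), fun hadj => h1 (h2.trans hadj.symm.reachable)⟩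
  have hdisj : Disjoint (S ×ˢ Sᶜ) (Sᶜ ×ˢ S) := by
    rw [Finset.disjoint_left]
    intro p hp hp'
    simp only [Finset.mem_product, Finset.mem_compl] at hp hp'
    exact hp'.1 hp.1
  have hcard := Finset.card_le_card hsub
  rw [Finset.card_union_of_disjoint hdisj, Finset.card_product, Finset.card_product] at hcard
  set k := S.card with hk
  have hkc : Sᶜ.card = n - k := by
    rw [Finset.card_compl, Fintype.card_fin]
  have hk1 : 1 ≤ k := Finset.card_pos.mpr ⟨u, huS⟩ 
  have hm1 : 1 ≤ Sᶜ.card := Finset.card_pos.mpr ⟨v, hvS⟩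
  have hkn : k ≤ n := by
    have := Finset.card_le_univ S
    simpa using this
  rw [hkc] at hcard hm1
  have key : 2 * (n - 1) ≤ k * (n - k) + (n - k) * k := by
    obtain ⟨a, ha⟩ := Nat.exists_eq_add_of_le hk1
    obtain ⟨b, hb⟩ := Nat.exists_eq_add_of_le hm1
    rw [hb, ha]
    have hn1 : n - 1 = a + (1 + b) := by omega
    rw [hn1]
    nlinarith
  omega

theorem connected_of_high_marginals (n : ℕ) (hn : 2 ≤ n)
    (μ : SimpleGraph (Fin n) → ℝ) (hμ : IsDist μ)
    (hmarg : ∀ u v : Fin n, u ≠ v → 1 - 2 / (n : ℝ) < pr μ (fun G => G.Adj u v)) :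
    0 < pr μ (fun G => G.Connected) := by
  classical
  have hn0 : (0:ℝ) < n := by
    have : (0:ℕ) < n := by omega
    exact_mod_cast this
  set D : Finset (Fin n × Fin n) := Finset.univ.filter (fun p => p.1 ≠ p.2) with hD
  have hDeq : D = (Finset.univ : Finset (Fin n)).offDiag := by
    ext p
    simp [hD, Finset.mem_offDiag]
  have hDcard : D.card = n * n - n := by
    rw [hDeq, Finset.offDiag_card]; simp
  set f : SimpleGraph (Fin n) → ℕ := fun G =>
    (Finset.univ.filter (fun p : Fin n × Fin n => p.1 ≠ p.2 ∧ ¬ G.Adj p.1 p.2)).card with hf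
  have hfeq : ∀ G, (f G : ℝ) = ∑ p ∈ D, (if ¬ G.Adj p.1 p.2 then (1:ℝ) else 0) := by
    intro G
    have h1 : Finset.univ.filter (fun p : Fin n × Fin n => p.1 ≠ p.2 ∧ ¬ G.Adj p.1 p.2)
        = D.filter (fun p => ¬ G.Adj p.1 p.2) := by
      rw [hD, Finset.filter_filter]
    rw [hf]
    simp only [h1, Finset.card_filter]
    push_cast
    rfl
  have hswap : ∑ G : SimpleGraph (Fin n), μ G * (f G : ℝ)
      = ∑ p ∈ D, pr μ (fun G => ¬ G.Adj p.1 p.2) := by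
    simp only [hfeq, Finset.mul_sum]
    rw [Finset.sum_comm]
    apply Finset.sum_congr rfl
    intro p _
    simp only [pr]
    apply Finset.sum_congr rfl
    intro G _
    by_cases h : G.Adj p.1 p.2 <;> simp [h]
  have hpnot : ∀ p ∈ D, pr μ (fun G => ¬ G.Adj p.1 p.2) < 2 / n := by
    intro p hp
    have hne : p.1 ≠ p.2 := by
      rw [hD, Finset.mem_filter] at hp
      exact hp.2
    have h2 := hmarg p.1 p.2 hne
    have h3 := pr_not_aux μ hμ (fun G => G.Adj p.1 p.2)
    rw [h3]
    linarith
  have hDne : D.Nonempty := by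
    refine ⟨(⟨0, by omega⟩, ⟨1, by omega⟩), ?_⟩
    rw [hD, Finset.mem_filter]
    refine ⟨Finset.mem_univ _, ?_⟩
    simp [Fin.ext_iff]
  have hE : ∑ G : SimpleGraph (Fin n), μ G * (f G : ℝ) < (D.card : ℝ) * (2 / n) := by
    rw [hswap]
    have h := Finset.sum_lt_sum_of_nonempty hDne hpnot
    simpa [Finset.sum_const, nsmul_eq_mul] using h
  have hDval : (D.card : ℝ) * (2 / n) = 2 * ((n:ℝ) - 1) := by
    rw [hDcard]
    have hle : n ≤ n * n := Nat.le_mul_of_pos_left n (by omega)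
    push_cast [Nat.cast_sub hle]
    field_simp
  have hcast : ∀ G : SimpleGraph (Fin n), ¬ G.Connected → 2 * ((n:ℝ) - 1) ≤ (f G : ℝ) := by
    intro G hG
    have h1 := disconn_card_aux hn G hG
    have h2 : ((2 * (n - 1) : ℕ) : ℝ) ≤ (f G : ℝ) := by exact_mod_cast h1
    push_cast [Nat.cast_sub (by omega : 1 ≤ n)] at h2
    linarith
  have hlow : pr μ (fun G => ¬ G.Connected) * (2 * ((n:ℝ) - 1))
      ≤ ∑ G : SimpleGraph (Fin n), μ G * (f G : ℝ) := by
    simp only [pr, Finset.sum_mul]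
    apply Finset.sum_le_sum
    intro G _
    by_cases h : G.Connected
    · simp only [h, not_true, if_false]
      rw [zero_mul]
      have := hμ.1 G
      positivity
    · simp only [h, not_false_iff, if_true]
      exact mul_le_mul_of_nonneg_left (hcast G h) (hμ.1 G)
  have hpos : (0:ℝ) < 2 * ((n:ℝ) - 1) := by
    have : (2:ℝ) ≤ n := by exact_mod_cast hn
    linarith
  have hlt1 : pr μ (fun G => ¬ G.Connected) < 1 := by
    have h := lt_of_le_of_lt hlow (lt_of_lt_of_eq hE hDval)
    exact lt_of_mul_lt_mul_right (by linarith) (le_of_lt hpos)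
  have hnot := pr_not_aux μ hμ (fun G => G.Connected)
  linarith
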